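/- log det(B C Cᵀ Bᵀ + σ² I_m) = 2 Σ_j log (F)_{jj} + m log σ², where F is the lower-triangular Cholesky factor with positive diagonal of I_r + σ⁻² Cᵀ Bᵀ B C. -/

import Mathlib

open Matrix

theorem stmt18 (m k r : ℕ) (B : Matrix (Fin m) (Fin k) ℝ) (C : Matrix (Fin k) (Fin r) ℝ)
    (σ2 : ℝ) (hσ : 0 < σ2) (F : Matrix (Fin r) (Fin r) ℝ)
    (hlow : ∀ i j : Fin r, i < j → F i j = 0) (hdiag : ∀ i : Fin r, 0 < F i i)
    (hFF : F * Fᵀ = (1 : Matrix (Fin r) (Fin r) ℝ) + σ2⁻¹ • (Cᵀ * Bᵀ * B * C)) :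
    Real.log ((B * C * Cᵀ * Bᵀ + σ2 • (1 : Matrix (Fin m) (Fin m) ℝ)).det) =
      2 * ∑ j : Fin r, Real.log (F j j) + (m : ℝ) * Real.log σ2 := by
  have hσ0 : σ2 ≠ 0 := ne_of_gt hσ
  have hdetF : F.det = ∏ i : Fin r, F i i := by
    apply det_of_lowerTriangular
    intro i j h
    exact hlow i j (by simpa using h)
  have hsplit : B * C * Cᵀ * Bᵀ + σ2 • (1 : Matrix (Fin m) (Fin m) ℝ) =
      σ2 • ((1 : Matrix (Fin m) (Fin m) ℝ) + (σ2⁻¹ • (B * C)) * (Cᵀ * Bᵀ)) := by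
    rw [smul_add, add_comm]
    congr 1
    rw [Matrix.smul_mul, smul_smul, mul_inv_cancel₀ hσ0, one_smul]
    simp [Matrix.mul_assoc]
  have hdet : ((1 : Matrix (Fin m) (Fin m) ℝ) + (σ2⁻¹ • (B * C)) * (Cᵀ * Bᵀ)).det
      = (F.det) ^ 2 := by
    rw [det_one_add_mul_comm]
    have : (1 : Matrix (Fin r) (Fin r) ℝ) + Cᵀ * Bᵀ * (σ2⁻¹ • (B * C)) = F * Fᵀ := by
      rw [hFF]
      congr 1
      rw [Matrix.mul_smul]
      congr 1
      simp [Matrix.mul_assoc]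
    rw [this, det_mul, det_transpose, sq]
  have hdetFpos : 0 < F.det := by
    rw [hdetF]; exact Finset.prod_pos fun i _ => hdiag i
  rw [hsplit, det_smul, Fintype.card_fin, hdet]
  rw [Real.log_mul (pow_ne_zero _ hσ0) (by positivity), Real.log_pow, Real.log_pow, hdetF,
    Real.log_prod fun i _ => ne_of_gt (hdiag i)]
  push_cast
  ring
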